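/- arXiv:1507.08752 — 3 statements merged into one kernel-verified Lean document; each statement's English description precedes it below -/
import Mathlib

section
/- If u is uniformly distributed on the Euclidean unit sphere in R^d with d > 1, then (E[||u||_∞^4])^{1/4} ≤ c sqrt(log(d)/d) for a positive numerical constant c independent of d. -/
open MeasureTheory Real


-- coeff lemmas
lemma coeff_zero_one_sub_pow (n : ℕ) : ((1 - Polynomial.X : Polynomial ℝ)^n).coeff 0 = 1 := by
  rw [Polynomial.coeff_zero_eq_eval_zero]
  simp

lemma coeff_one_one_sub_pow (n : ℕ) : ((1 - Polynomial.X : Polynomial ℝ)^n).coeff 1 = -(n:ℝ) := by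
  induction n with
  | zero => simp [Polynomial.coeff_one]
  | succ n ih =>
    have : ((1 - Polynomial.X : Polynomial ℝ)^(n+1)) =
        (1 - Polynomial.X)^n - (1 - Polynomial.X)^n * Polynomial.X := by ring
    rw [this, Polynomial.coeff_sub, Polynomial.coeff_mul_X, ih, coeff_zero_one_sub_pow]
    push_cast; ring



variable {d : ℕ}

def rotFun (i0 i1 : Fin d) (c s : ℝ) (x : EuclideanSpace ℝ (Fin d)) :
    EuclideanSpace ℝ (Fin d) :=
  WithLp.toLp 2 (fun i => if i = i0 then c * x i0 + s * x i1 else if i = i1 then -s * x i0 + c * x i1 else x i)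

variable {i0 i1 : Fin d} {c s : ℝ}

lemma rotFun_apply0 (x : EuclideanSpace ℝ (Fin d)) :
    rotFun i0 i1 c s x i0 = c * x i0 + s * x i1 := by simp [rotFun]

lemma rotFun_apply1 (hne : i0 ≠ i1) (x : EuclideanSpace ℝ (Fin d)) :
    rotFun i0 i1 c s x i1 = -s * x i0 + c * x i1 := by simp [rotFun, hne.symm]

lemma rotFun_apply_other {i : Fin d} (h0 : i ≠ i0) (h1 : i ≠ i1) (x : EuclideanSpace ℝ (Fin d)) :
    rotFun i0 i1 c s x i = x i := by simp [rotFun, h0, h1]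

lemma rotFun_add (hne : i0 ≠ i1) (x y : EuclideanSpace ℝ (Fin d)) :
    rotFun i0 i1 c s (x + y) = rotFun i0 i1 c s x + rotFun i0 i1 c s y := by
  ext i
  have hxy : ∀ j : Fin d, (x + y) j = x j + y j := fun _ => rfl
  have hsum : (rotFun i0 i1 c s x + rotFun i0 i1 c s y) i
      = rotFun i0 i1 c s x i + rotFun i0 i1 c s y i := rfl
  rcases eq_or_ne i i0 with rfl | h0
  · rw [rotFun_apply0, hsum, rotFun_apply0, rotFun_apply0, hxy, hxy]; ring
  rcases eq_or_ne i i1 with rfl | h1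
  · rw [rotFun_apply1 hne, hsum, rotFun_apply1 hne, rotFun_apply1 hne, hxy, hxy]; ring
  · rw [rotFun_apply_other h0 h1, hsum, rotFun_apply_other h0 h1, rotFun_apply_other h0 h1, hxy]

lemma rotFun_smul (hne : i0 ≠ i1) (r : ℝ) (x : EuclideanSpace ℝ (Fin d)) :
    rotFun i0 i1 c s (r • x) = r • rotFun i0 i1 c s x := by
  ext i
  have hxy : ∀ j : Fin d, (r • x) j = r * x j := fun _ => rfl
  have hsum : (r • rotFun i0 i1 c s x) i = r * rotFun i0 i1 c s x i := rfl
  rcases eq_or_ne i i0 with rfl | h0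
  · rw [rotFun_apply0, hsum, rotFun_apply0, hxy, hxy]; ring
  rcases eq_or_ne i i1 with rfl | h1
  · rw [rotFun_apply1 hne, hsum, rotFun_apply1 hne, hxy, hxy]; ring
  · rw [rotFun_apply_other h0 h1, hsum, rotFun_apply_other h0 h1, hxy]

lemma rotFun_inv (hne : i0 ≠ i1) (h : c^2 + s^2 = 1) (x : EuclideanSpace ℝ (Fin d)) :
    rotFun i0 i1 c s (rotFun i0 i1 c (-s) x) = x := by
  ext i
  rcases eq_or_ne i i0 with rfl | h0
  · rw [rotFun_apply0, rotFun_apply0, rotFun_apply1 hne]; linear_combination x i * h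
  rcases eq_or_ne i i1 with rfl | h1
  · rw [rotFun_apply1 hne, rotFun_apply0, rotFun_apply1 hne]; linear_combination x i * h
  · rw [rotFun_apply_other h0 h1, rotFun_apply_other h0 h1]

lemma rotFun_inv' (hne : i0 ≠ i1) (h : c^2 + s^2 = 1) (x : EuclideanSpace ℝ (Fin d)) :
    rotFun i0 i1 c (-s) (rotFun i0 i1 c s x) = x := by
  have h' : c^2 + (-s)^2 = 1 := by nlinarith [h]
  have := rotFun_inv (c := c) (s := -s) hne h' x
  rwa [neg_neg] at this

lemma rotFun_sumsq (hne : i0 ≠ i1) (h : c^2 + s^2 = 1)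
    (x : EuclideanSpace ℝ (Fin d)) :
    ∑ i, ‖rotFun i0 i1 c s x i‖^2 = ∑ i, ‖x i‖^2 := by
  have key : ∑ i : Fin d, (‖rotFun i0 i1 c s x i‖^2 - ‖x i‖^2) = 0 := by
    rw [← Finset.sum_subset (Finset.subset_univ ({i0, i1} : Finset (Fin d)))]
    · rw [Finset.sum_pair hne, rotFun_apply0, rotFun_apply1 hne]
      simp only [Real.norm_eq_abs, sq_abs]
      nlinarith [h]
    · intro i _ hi
      simp only [Finset.mem_insert, Finset.mem_singleton, not_or] at hi
      rw [rotFun_apply_other hi.1 hi.2]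
      ring
  have h2 := Finset.sum_sub_distrib (s := (Finset.univ : Finset (Fin d)))
    (f := fun i => ‖rotFun i0 i1 c s x i‖^2) (g := fun i => ‖x i‖^2)
  rw [h2] at key
  linarith

noncomputable def rotIso (hne : i0 ≠ i1) (h : c^2 + s^2 = 1) :
    EuclideanSpace ℝ (Fin d) ≃ₗᵢ[ℝ] EuclideanSpace ℝ (Fin d) where
  toFun := rotFun i0 i1 c s
  invFun := rotFun i0 i1 c (-s)
  map_add' := rotFun_add hne
  map_smul' := rotFun_smul hne
  left_inv := rotFun_inv' hne h
  right_inv := rotFun_inv hne h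
  norm_map' := by
    intro x
    rw [EuclideanSpace.norm_eq, EuclideanSpace.norm_eq]
    exact congrArg Real.sqrt (rotFun_sumsq hne h x)

lemma rotIso_apply (hne : i0 ≠ i1) (h : c^2 + s^2 = 1) (x : EuclideanSpace ℝ (Fin d)) :
    rotIso hne h x = rotFun i0 i1 c s x := rfl


variable {d : ℕ}

lemma coord_abs_le_norm (x : EuclideanSpace ℝ (Fin d)) (i : Fin d) : |x i| ≤ ‖x‖ := by
  rw [EuclideanSpace.norm_eq]
  have h1 : |x i| = Real.sqrt (‖x i‖^2) := by
    rw [Real.sqrt_sq_eq_abs, abs_norm, Real.norm_eq_abs]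
  rw [h1]
  apply Real.sqrt_le_sqrt
  exact Finset.single_le_sum (f := fun j => ‖x j‖^2) (fun j _ => sq_nonneg _) (Finset.mem_univ i)

noncomputable def permIso (σ : Equiv.Perm (Fin d)) :
    EuclideanSpace ℝ (Fin d) ≃ₗᵢ[ℝ] EuclideanSpace ℝ (Fin d) :=
  LinearIsometryEquiv.piLpCongrLeft 2 ℝ ℝ σ

lemma permIso_apply (σ : Equiv.Perm (Fin d)) (x : EuclideanSpace ℝ (Fin d)) (i : Fin d) :
    permIso σ x i = x (σ.symm i) := by
  simp [permIso, LinearIsometryEquiv.piLpCongrLeft_apply, Equiv.piCongrLeft']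

noncomputable def flipIso (i1 : Fin d) :
    EuclideanSpace ℝ (Fin d) ≃ₗᵢ[ℝ] EuclideanSpace ℝ (Fin d) :=
  LinearIsometryEquiv.piLpCongrRight 2
    (fun i => if i = i1 then LinearIsometryEquiv.neg ℝ else LinearIsometryEquiv.refl ℝ ℝ)

lemma flipIso_apply (i1 : Fin d) (x : EuclideanSpace ℝ (Fin d)) (i : Fin d) :
    flipIso i1 x i = if i = i1 then -x i else x i := by
  rw [flipIso, LinearIsometryEquiv.piLpCongrRight_apply]
  rcases eq_or_ne i i1 with rfl | h
  · simp
  · simp [h]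

variable {μ : Measure (EuclideanSpace ℝ (Fin d))}

lemma integral_comp_iso
    (hinv : ∀ T : EuclideanSpace ℝ (Fin d) ≃ₗᵢ[ℝ] EuclideanSpace ℝ (Fin d), μ.map T = μ)
    (T : EuclideanSpace ℝ (Fin d) ≃ₗᵢ[ℝ] EuclideanSpace ℝ (Fin d))
    (g : EuclideanSpace ℝ (Fin d) → ℝ) (hg : AEStronglyMeasurable g μ) :
    ∫ u, g u ∂μ = ∫ u, g (T u) ∂μ := by
  conv_lhs => rw [← hinv T]
  exact integral_map (T.continuous.measurable.aemeasurable) (by rwa [hinv T])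

lemma integrable_aux [IsProbabilityMeasure μ] (hμ1 : ∀ᵐ u ∂μ, ‖u‖ = 1)
    (g : EuclideanSpace ℝ (Fin d) → ℝ) (hg : Continuous g)
    (hb : ∀ u : EuclideanSpace ℝ (Fin d), ‖u‖ = 1 → |g u| ≤ 1) :
    Integrable g μ := by
  apply Integrable.mono' (integrable_const (1:ℝ)) hg.aestronglyMeasurable
  filter_upwards [hμ1] with u hu
  rw [Real.norm_eq_abs]
  exact hb u hu


section moments

variable {d : ℕ} {μ : Measure (EuclideanSpace ℝ (Fin d))} [IsProbabilityMeasure μ]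

lemma integrable_coord_pow (hμ1 : ∀ᵐ u ∂μ, ‖u‖ = 1) (i j : Fin d) (a b : ℕ) :
    Integrable (fun u : EuclideanSpace ℝ (Fin d) => (u i)^a * (u j)^b) μ := by
  apply integrable_aux hμ1
  · exact ((PiLp.continuous_apply 2 _ i).pow a).mul ((PiLp.continuous_apply 2 _ j).pow b)
  · intro u hu
    rw [abs_mul, abs_pow, abs_pow]
    have h1 : |u i| ≤ 1 := hu ▸ coord_abs_le_norm u i
    have h2 : |u j| ≤ 1 := hu ▸ coord_abs_le_norm u j
    calc |u i|^a * |u j|^b ≤ 1 * 1 :=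
          mul_le_mul (pow_le_one₀ (abs_nonneg _) h1) (pow_le_one₀ (abs_nonneg _) h2)
            (pow_nonneg (abs_nonneg _) b) zero_le_one
      _ = 1 := by ring

omit [IsProbabilityMeasure μ] in
lemma odd_moment_zero
    (hinv : ∀ T : EuclideanSpace ℝ (Fin d) ≃ₗᵢ[ℝ] EuclideanSpace ℝ (Fin d), μ.map T = μ)
    {i0 i1 : Fin d} (hne : i0 ≠ i1) (a b : ℕ) (hb : Odd b) :
    ∫ u, (u i0)^a * (u i1)^b ∂μ = 0 := by
  have hsm : AEStronglyMeasurable (fun u : EuclideanSpace ℝ (Fin d) => (u i0)^a * (u i1)^b) μ :=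
    (((PiLp.continuous_apply 2 _ i0).pow a).mul ((PiLp.continuous_apply 2 _ i1).pow b)).aestronglyMeasurable
  have h1 := integral_comp_iso hinv (flipIso i1)
    (fun u : EuclideanSpace ℝ (Fin d) => (u i0)^a * (u i1)^b) hsm
  have h2 : ∀ u : EuclideanSpace ℝ (Fin d),
      ((flipIso i1 u) i0)^a * ((flipIso i1 u) i1)^b = -((u i0)^a * (u i1)^b) := by
    intro u
    rw [flipIso_apply, flipIso_apply, if_neg hne, if_pos rfl, hb.neg_pow]
    ring
  rw [show (∫ u, ((flipIso i1 u) i0)^a * ((flipIso i1 u) i1)^b ∂μ)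
      = ∫ u, -((u i0)^a * (u i1)^b) ∂μ from by simp_rw [h2]] at h1
  rw [integral_neg] at h1
  linarith

lemma rotation_identity (hμ1 : ∀ᵐ u ∂μ, ‖u‖ = 1)
    (hinv : ∀ T : EuclideanSpace ℝ (Fin d) ≃ₗᵢ[ℝ] EuclideanSpace ℝ (Fin d), μ.map T = μ)
    {i0 i1 : Fin d} (hne : i0 ≠ i1) (k : ℕ) {t : ℝ} (ht0 : 0 ≤ t) (ht1 : t ≤ 1) :
    ∑ j ∈ Finset.range (k+1), ((2*k).choose (2*j) : ℝ)
        * (∫ u, (u i0)^(2*(k-j)) * (u i1)^(2*j) ∂μ) * ((1-t)^(k-j) * t^j)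
      = ∫ u, (u i0)^(2*k) ∂μ := by
  set c := Real.sqrt (1-t) with hc
  set s := Real.sqrt t with hs
  have hc2 : c^2 = 1 - t := Real.sq_sqrt (by linarith)
  have hs2 : s^2 = t := Real.sq_sqrt ht0
  have hcs : c^2 + s^2 = 1 := by rw [hc2, hs2]; ring
  have key : ∫ u, (u i0)^(2*k) ∂μ
      = ∑ j ∈ Finset.range (2*k+1),
          (c^j * s^(2*k-j) * ((2*k).choose j : ℝ)) * ∫ u, (u i0)^j * (u i1)^(2*k-j) ∂μ := by
    have h1 := integral_comp_iso hinv (rotIso hne hcs)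
      (fun u : EuclideanSpace ℝ (Fin d) => (u i0)^(2*k))
      (((PiLp.continuous_apply 2 _ i0).pow (2*k)).aestronglyMeasurable)
    have hexp : ∀ u : EuclideanSpace ℝ (Fin d),
        ((rotIso hne hcs u) i0)^(2*k)
          = ∑ j ∈ Finset.range (2*k+1),
              (c^j * s^(2*k-j) * ((2*k).choose j : ℝ)) * ((u i0)^j * (u i1)^(2*k-j)) := by
      intro u
      rw [rotIso_apply, rotFun_apply0, add_pow]
      apply Finset.sum_congr rfl
      intro j _
      rw [mul_pow, mul_pow]
      push_cast
      ring
    rw [h1]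
    simp_rw [hexp]
    rw [integral_finset_sum _
      (fun j _ => ((integrable_coord_pow hμ1 i0 i1 j (2*k-j)).const_mul _))]
    simp_rw [integral_const_mul]
  -- parity split
  set F : ℕ → ℝ := fun j =>
    (c^j * s^(2*k-j) * ((2*k).choose j : ℝ)) * ∫ u, (u i0)^j * (u i1)^(2*k-j) ∂μ with hF
  have hsub : (Finset.range (k+1)).image (fun m => 2*m) ⊆ Finset.range (2*k+1) := by
    intro j hj
    simp only [Finset.mem_image, Finset.mem_range] at hj ⊢
    obtain ⟨m, hm, rfl⟩ := hj
    omega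
  have hzero : ∀ j ∈ Finset.range (2*k+1),
      j ∉ (Finset.range (k+1)).image (fun m => 2*m) → F j = 0 := by
    intro j hj hjim
    have hodd : Odd j := by
      rcases Nat.even_or_odd j with he | ho
      · exfalso
        obtain ⟨m, rfl⟩ := he
        apply hjim
        simp only [Finset.mem_image, Finset.mem_range]
        simp only [Finset.mem_range] at hj
        exact ⟨m, by omega, by omega⟩
      · exact ho
    have hoddb : Odd (2*k - j) := by
      apply Nat.Even.sub_odd _ (even_two_mul k) hodd
      simp only [Finset.mem_range] at hj
      omega
    rw [hF]
    simp only
    rw [odd_moment_zero hinv hne j (2*k-j) hoddb, mul_zero]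
  have key2 : ∫ u, (u i0)^(2*k) ∂μ = ∑ j ∈ Finset.range (k+1), F (2*j) := by
    rw [key, ← Finset.sum_subset hsub hzero,
      Finset.sum_image (fun a _ b _ h => by omega : ∀ a ∈ Finset.range (k+1),
        ∀ b ∈ Finset.range (k+1), 2*a = 2*b → a = b)]
  rw [key2, ← Finset.sum_range_reflect (fun j => F (2*j)) (k+1)]
  apply Finset.sum_congr rfl
  intro j hj
  simp only [Finset.mem_range] at hj
  have hjk : j ≤ k := by omega
  have e1 : k + 1 - 1 - j = k - j := by omega
  rw [e1, hF]
  simp only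
  have e2 : 2*k - 2*(k-j) = 2*j := by omega
  have e3 : (2*k).choose (2*(k-j)) = (2*k).choose (2*j) := by
    rw [show 2*(k-j) = 2*k - 2*j by omega, Nat.choose_symm (by omega)]
  have e4 : c^(2*(k-j)) = (1-t)^(k-j) := by rw [pow_mul, hc2]
  have e5 : s^(2*j) = t^j := by rw [pow_mul, hs2]
  rw [e2, e3, e4, e5]
  ring

lemma moment_ratio (hμ1 : ∀ᵐ u ∂μ, ‖u‖ = 1)
    (hinv : ∀ T : EuclideanSpace ℝ (Fin d) ≃ₗᵢ[ℝ] EuclideanSpace ℝ (Fin d), μ.map T = μ)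
    {i0 i1 : Fin d} (hne : i0 ≠ i1) (k : ℕ) (hk : 1 ≤ k) :
    (2*(k:ℝ) - 1) * ∫ u, (u i0)^(2*(k-1)) * (u i1)^2 ∂μ = ∫ u, (u i0)^(2*k) ∂μ := by
  set M : ℕ → ℝ := fun j => ∫ u, (u i0)^(2*(k-j)) * (u i1)^(2*j) ∂μ with hM
  set P : Polynomial ℝ := (∑ j ∈ Finset.range (k+1),
      Polynomial.C (((2*k).choose (2*j) : ℝ) * M j)
        * ((1 - Polynomial.X)^(k-j) * Polynomial.X^j))
      - Polynomial.C (∫ u, (u i0)^(2*k) ∂μ) with hP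
  have hroot : Set.Icc (0:ℝ) 1 ⊆ {x | P.IsRoot x} := by
    intro t ht
    have := rotation_identity hμ1 hinv hne k ht.1 ht.2
    simp only [Set.mem_setOf_eq, Polynomial.IsRoot, hP, Polynomial.eval_sub,
      Polynomial.eval_finset_sum, Polynomial.eval_mul, Polynomial.eval_C,
      Polynomial.eval_pow, Polynomial.eval_sub, Polynomial.eval_one, Polynomial.eval_X]
    rw [sub_eq_zero, ← this]
  have hP0 : P = 0 := by
    apply Polynomial.eq_zero_of_infinite_isRoot
    apply Set.Infinite.mono hroot
    rw [← Set.infinite_coe_iff]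
    exact Set.Icc.infinite (by norm_num)
  have hc1 : P.coeff 1 = 0 := by rw [hP0]; simp
  rw [hP, Polynomial.coeff_sub, Polynomial.coeff_C, if_neg one_ne_zero,
    Polynomial.finset_sum_coeff] at hc1
  have hterm : ∀ j, (Polynomial.C (((2*k).choose (2*j) : ℝ) * M j)
      * ((1 - Polynomial.X)^(k-j) * Polynomial.X^j)).coeff 1
      = (((2*k).choose (2*j) : ℝ) * M j)
        * (if j ≤ 1 then ((1 - Polynomial.X : Polynomial ℝ)^(k-j)).coeff (1-j) else 0) := by
    intro j
    rw [← mul_assoc, Polynomial.coeff_mul_X_pow', Polynomial.coeff_C_mul]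
    split_ifs <;> simp
  simp_rw [hterm] at hc1
  rw [← Finset.sum_subset (Finset.range_subset_range.mpr (by omega : 2 ≤ k+1))
    (by intro j _ hj
        simp only [Finset.mem_range] at hj
        rw [if_neg (by omega)]
        ring)] at hc1
  rw [Finset.sum_range_succ, Finset.sum_range_one] at hc1
  rw [if_pos (by norm_num), if_pos le_rfl] at hc1
  simp only [Nat.sub_zero, Nat.mul_zero, Nat.choose_zero_right, Nat.cast_one, one_mul,
    Nat.sub_self] at hc1
  rw [coeff_one_one_sub_pow, coeff_zero_one_sub_pow] at hc1
  have hch : ((2*k).choose (2*1) : ℝ) = k * (2*(k:ℝ) - 1) := by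
    have h3 : 2*k*(2*k-1) = k*(2*k-1)*2 := by ring
    have : (2*k).choose 2 = k * (2*k-1) := by
      rw [Nat.choose_two_right, h3, Nat.mul_div_cancel _ (by norm_num)]
    rw [show 2*1 = 2 from rfl, this]
    push_cast [Nat.cast_sub (by omega : 1 ≤ 2*k)]
    ring
  rw [hch] at hc1
  have hM0 : M 0 = ∫ u, (u i0)^(2*k) ∂μ := by
    rw [hM]
    simp
  have hM1 : M 1 = ∫ u, (u i0)^(2*(k-1)) * (u i1)^2 ∂μ := by
    rw [hM]
    try norm_num
  have hkne : (k:ℝ) ≠ 0 := Nat.cast_ne_zero.mpr (by omega)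
  apply mul_left_cancel₀ hkne
  rw [hM0, hM1] at hc1
  nlinarith [hc1]

lemma integrable_coord_pow1 (hμ1 : ∀ᵐ u ∂μ, ‖u‖ = 1) (i : Fin d) (a : ℕ) :
    Integrable (fun u : EuclideanSpace ℝ (Fin d) => (u i)^a) μ := by
  apply integrable_aux hμ1
  · exact (PiLp.continuous_apply 2 _ i).pow a
  · intro u hu
    rw [abs_pow]
    exact pow_le_one₀ (abs_nonneg _) (hu ▸ coord_abs_le_norm u i)

omit [IsProbabilityMeasure μ] in
lemma sum_sq_ae (hμ1 : ∀ᵐ u ∂μ, ‖u‖ = 1) : ∀ᵐ u ∂μ, ∑ i, (u i)^2 = 1 := by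
  filter_upwards [hμ1] with u hu
  rw [EuclideanSpace.norm_eq, Real.sqrt_eq_one] at hu
  rw [← hu]
  apply Finset.sum_congr rfl
  intro i _
  rw [Real.norm_eq_abs, sq_abs]

omit [IsProbabilityMeasure μ] in
lemma swap_moment
    (hinv : ∀ T : EuclideanSpace ℝ (Fin d) ≃ₗᵢ[ℝ] EuclideanSpace ℝ (Fin d), μ.map T = μ)
    {i0 i1 i : Fin d} (h0 : i ≠ i0) (hne : i0 ≠ i1) (a : ℕ) :
    ∫ u, (u i0)^a * (u i)^2 ∂μ = ∫ u, (u i0)^a * (u i1)^2 ∂μ := by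
  rcases eq_or_ne i i1 with rfl | hii1
  · rfl
  · have h1 := integral_comp_iso hinv (permIso (Equiv.swap i i1))
      (fun u : EuclideanSpace ℝ (Fin d) => (u i0)^a * (u i1)^2)
      (((PiLp.continuous_apply 2 _ i0).pow a).mul ((PiLp.continuous_apply 2 _ i1).pow 2)).aestronglyMeasurable
    rw [h1]
    apply integral_congr_ae
    apply Filter.Eventually.of_forall
    intro u
    simp only [permIso_apply, Equiv.symm_swap]
    rw [Equiv.swap_apply_of_ne_of_ne (Ne.symm h0) hne, Equiv.swap_apply_right]

omit [IsProbabilityMeasure μ] in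
lemma coord_moment_eq
    (hinv : ∀ T : EuclideanSpace ℝ (Fin d) ≃ₗᵢ[ℝ] EuclideanSpace ℝ (Fin d), μ.map T = μ)
    (i j : Fin d) (a : ℕ) :
    ∫ u, (u i)^a ∂μ = ∫ u, (u j)^a ∂μ := by
  have h1 := integral_comp_iso hinv (permIso (Equiv.swap j i))
    (fun u : EuclideanSpace ℝ (Fin d) => (u i)^a)
    ((PiLp.continuous_apply 2 _ i).pow a).aestronglyMeasurable
  rw [h1]
  apply integral_congr_ae
  apply Filter.Eventually.of_forall
  intro u
  simp only [permIso_apply, Equiv.symm_swap]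
  rw [Equiv.swap_apply_right]

lemma recurrence (hd : 1 < d) (hμ1 : ∀ᵐ u ∂μ, ‖u‖ = 1)
    (hinv : ∀ T : EuclideanSpace ℝ (Fin d) ≃ₗᵢ[ℝ] EuclideanSpace ℝ (Fin d), μ.map T = μ)
    {i0 i1 : Fin d} (hne : i0 ≠ i1) (k : ℕ) (hk : 1 ≤ k) :
    ((d:ℝ) + 2*k - 2) * ∫ u, (u i0)^(2*k) ∂μ
      = (2*(k:ℝ) - 1) * ∫ u, (u i0)^(2*(k-1)) ∂μ := by
  set m1 : ℝ := ∫ u, (u i0)^(2*(k-1)) * (u i1)^2 ∂μ with hm1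
  have hsplit : ∫ u, (u i0)^(2*(k-1)) ∂μ
      = ∑ i, ∫ u, (u i0)^(2*(k-1)) * (u i)^2 ∂μ := by
    rw [← integral_finset_sum _ (fun i _ => integrable_coord_pow hμ1 i0 i (2*(k-1)) 2)]
    apply integral_congr_ae
    filter_upwards [sum_sq_ae hμ1] with u hu
    rw [← Finset.mul_sum, hu, mul_one]
  have hterm0 : ∫ u, (u i0)^(2*(k-1)) * (u i0)^2 ∂μ = ∫ u, (u i0)^(2*k) ∂μ := by
    apply integral_congr_ae
    apply Filter.Eventually.of_forall
    intro u
    show u i0 ^ (2*(k-1)) * u i0 ^ 2 = u i0 ^ (2*k)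
    rw [← pow_add]
    congr 1
    omega
  have hrest : ∀ i ∈ Finset.univ.erase i0,
      ∫ u, (u i0)^(2*(k-1)) * (u i)^2 ∂μ = m1 := by
    intro i hi
    exact swap_moment hinv (Finset.ne_of_mem_erase hi) hne (2*(k-1))
  have hcard : (Finset.univ.erase i0).card = d - 1 := by
    rw [Finset.card_erase_of_mem (Finset.mem_univ i0), Finset.card_univ, Fintype.card_fin]
  have hsum2 : ∫ u, (u i0)^(2*(k-1)) ∂μ = ∫ u, (u i0)^(2*k) ∂μ + ((d:ℝ) - 1) * m1 := by
    rw [hsplit, ← Finset.add_sum_erase _ _ (Finset.mem_univ i0), hterm0,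
      Finset.sum_congr rfl hrest, Finset.sum_const, nsmul_eq_mul, hcard]
    congr 2
    have : (1:ℕ) ≤ d := by omega
    push_cast [Nat.cast_sub this]
    ring
  have hratio : (2*(k:ℝ) - 1) * m1 = ∫ u, (u i0)^(2*k) ∂μ :=
    moment_ratio hμ1 hinv hne k hk
  rw [hsum2]
  nlinarith [hratio]

omit [IsProbabilityMeasure μ] in
lemma moment_nonneg (i : Fin d) (k : ℕ) : 0 ≤ ∫ u, (u i)^(2*k) ∂μ := by
  apply integral_nonneg
  intro u
  show (0:ℝ) ≤ u i ^ (2*k)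
  rw [pow_mul]
  positivity

lemma moment_bound (hd : 1 < d) (hμ1 : ∀ᵐ u ∂μ, ‖u‖ = 1)
    (hinv : ∀ T : EuclideanSpace ℝ (Fin d) ≃ₗᵢ[ℝ] EuclideanSpace ℝ (Fin d), μ.map T = μ)
    {i0 i1 : Fin d} (hne : i0 ≠ i1) (k : ℕ) :
    ∫ u, (u i0)^(2*k) ∂μ ≤ (2*(k:ℝ)/d)^k := by
  induction k with
  | zero => simp
  | succ n ih =>
    have hd0 : (0:ℝ) < d := by positivity
    have hd2 : (2:ℝ) ≤ d := by exact_mod_cast hd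
    have heq := recurrence hd hμ1 hinv hne (n+1) (by omega)
    simp only [Nat.add_sub_cancel] at heq
    have hmn : 0 ≤ ∫ u, (u i0)^(2*n) ∂μ := moment_nonneg i0 n
    have hmn1 : 0 ≤ ∫ u, (u i0)^(2*(n+1)) ∂μ := moment_nonneg i0 (n+1)
    have h1 : ∫ u, (u i0)^(2*(n+1)) ∂μ ≤ (2*((n:ℝ)+1)/d) * ∫ u, (u i0)^(2*n) ∂μ := by
      rw [div_mul_eq_mul_div, le_div_iff₀ hd0]
      push_cast at heq
      nlinarith [heq, mul_nonneg (by positivity : (0:ℝ) ≤ 2*(n:ℝ)) hmn1]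
    calc ∫ u, (u i0)^(2*(n+1)) ∂μ
        ≤ (2*((n:ℝ)+1)/d) * ∫ u, (u i0)^(2*n) ∂μ := h1
      _ ≤ (2*((n:ℝ)+1)/d) * (2*(n:ℝ)/d)^n := by
          apply mul_le_mul_of_nonneg_left ih (by positivity)
      _ ≤ (2*((n:ℝ)+1)/d) * (2*((n:ℝ)+1)/d)^n := by
          apply mul_le_mul_of_nonneg_left _ (by positivity)
          apply pow_le_pow_left₀ (by positivity)
          gcongr
          linarith
      _ = (2*((n:ℝ)+1)/d)^(n+1) := by rw [← pow_succ']
      _ = (2*(((n:ℕ)+1:ℕ):ℝ)/d)^(n+1) := by push_cast; ring_nf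

lemma sum_coord_moment (hμ1 : ∀ᵐ u ∂μ, ‖u‖ = 1)
    (hinv : ∀ T : EuclideanSpace ℝ (Fin d) ≃ₗᵢ[ℝ] EuclideanSpace ℝ (Fin d), μ.map T = μ)
    (i0 : Fin d) (k : ℕ) :
    ∫ u, (∑ i, (u i)^(2*k)) ∂μ = d * ∫ u, (u i0)^(2*k) ∂μ := by
  rw [integral_finset_sum _ (fun i _ => integrable_coord_pow1 hμ1 i (2*k)),
    Finset.sum_congr rfl (fun i _ => coord_moment_eq hinv i i0 (2*k)),
    Finset.sum_const, Finset.card_univ, Fintype.card_fin, nsmul_eq_mul]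
end moments
set_option maxHeartbeats 1000000 in
/-- For `u` uniform on the Euclidean unit sphere in `ℝ^d`, `d > 1`:
`(E[‖u‖_∞⁴])^{1/4} ≤ c √(log d / d)` for a positive numerical constant `c`. -/
theorem stmt9 : ∃ c : ℝ, 0 < c ∧
    ∀ (d : ℕ), 1 < d →
    ∀ (μ : Measure (EuclideanSpace ℝ (Fin d))), IsProbabilityMeasure μ →
    (∀ᵐ u ∂μ, ‖u‖ = 1) →
    (∀ T : EuclideanSpace ℝ (Fin d) ≃ₗᵢ[ℝ] EuclideanSpace ℝ (Fin d), μ.map T = μ) →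
    (∫ u, ‖(WithLp.equiv 2 (Fin d → ℝ)) u‖ ^ 4 ∂μ) ^ ((1 : ℝ) / 4)
      ≤ c * Real.sqrt (Real.log d / d) := by
  refine ⟨11, by norm_num, ?_⟩
  intro d hd μ hprob hμ1 hinv
  haveI := hprob
  set f : EuclideanSpace ℝ (Fin d) → ℝ := fun u => ‖(WithLp.equiv 2 (Fin d → ℝ)) u‖ with hfdef
  have hd0 : (0:ℝ) < d := by
    have : 0 < d := by omega
    exact_mod_cast this
  have hd2 : (2:ℝ) ≤ d := by exact_mod_cast hd
  set L := Real.log d with hLdef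
  have hlog2 : (0.6931471803:ℝ) < Real.log 2 := Real.log_two_gt_d9
  have hL2 : Real.log 2 ≤ L := Real.log_le_log (by norm_num) hd2
  have hL0 : 0 < L := lt_of_lt_of_le (lt_trans (by norm_num) hlog2) hL2
  set k := ⌈L⌉₊ with hkdef
  have hk1 : 1 ≤ k := by
    have : 0 < k := Nat.ceil_pos.mpr hL0
    omega
  have hkL : L ≤ (k:ℝ) := Nat.le_ceil L
  have hkU : (k:ℝ) ≤ L + 1 := (Nat.ceil_lt_add_one hL0.le).le
  set i0 : Fin d := ⟨0, by omega⟩ with hi0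
  set i1 : Fin d := ⟨1, by omega⟩ with hi1
  have hne : i0 ≠ i1 := by
    simp only [hi0, hi1, Ne, Fin.mk.injEq]
    omega
  set ε := Real.sqrt (120 * L / d) with hεdef
  have hε0 : 0 ≤ ε := Real.sqrt_nonneg _
  have hε2 : ε^2 = 120 * L / d := Real.sq_sqrt (by positivity)
  -- f properties
  have hf_cont : Continuous f :=
    continuous_norm.comp (PiLp.continuous_ofLp 2 (fun _ : Fin d => ℝ))
  have hf_nonneg : ∀ u, 0 ≤ f u := fun u => norm_nonneg _
  have hf_le_norm : ∀ u : EuclideanSpace ℝ (Fin d), f u ≤ ‖u‖ := by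
    intro u
    rw [hfdef]
    rw [pi_norm_le_iff_of_nonneg (norm_nonneg u)]
    intro i
    rw [Real.norm_eq_abs]
    exact coord_abs_le_norm u i
  have hf_le : ∀ u : EuclideanSpace ℝ (Fin d), ‖u‖ = 1 → f u ≤ 1 :=
    fun u hu => (hf_le_norm u).trans_eq hu
  have hf_pow_le : ∀ u : EuclideanSpace ℝ (Fin d), f u ^(2*k) ≤ ∑ i, (u i)^(2*k) := by
    intro u
    have hne' : (Finset.univ : Finset (Fin d)).Nonempty :=
      ⟨i0, Finset.mem_univ i0⟩
    obtain ⟨i, _, hi⟩ := Finset.exists_mem_eq_sup' hne'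
      (fun b => ‖(WithLp.equiv 2 (Fin d → ℝ)) u b‖₊)
    have hfu : f u = |u i| := by
      rw [hfdef]
      simp only
      rw [Pi.norm_def, ← Finset.sup'_eq_sup hne', hi]
      rfl
    have h1 : f u ^(2*k) = (u i)^(2*k) := by
      rw [hfu, pow_abs, abs_of_nonneg (by rw [pow_mul]; positivity)]
    rw [h1]
    exact Finset.single_le_sum
      (f := fun j => (u j)^(2*k))
      (fun j _ => by show (0:ℝ) ≤ u j ^ (2*k); rw [pow_mul]; positivity) (Finset.mem_univ i)
  have hf_int : ∀ n : ℕ, Integrable (fun u => f u ^ n) μ := by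
    intro n
    apply integrable_aux hμ1 _ (hf_cont.pow n)
    intro u hu
    show |f u ^ n| ≤ 1
    rw [abs_of_nonneg (pow_nonneg (hf_nonneg u) n)]
    exact pow_le_one₀ (hf_nonneg u) (hf_le u hu)
  -- moment bound
  have hmom : ∫ u, f u ^(2*k) ∂μ ≤ d * (2*(k:ℝ)/d)^k := by
    calc ∫ u, f u ^(2*k) ∂μ
        ≤ ∫ u, (∑ i, (u i)^(2*k)) ∂μ := by
          apply integral_mono (hf_int (2*k))
            (integrable_finset_sum _ (fun i _ => integrable_coord_pow1 hμ1 i (2*k)))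
          exact hf_pow_le
      _ = d * ∫ u, (u i0)^(2*k) ∂μ := sum_coord_moment hμ1 hinv i0 k
      _ ≤ d * (2*(k:ℝ)/d)^k :=
          mul_le_mul_of_nonneg_left (moment_bound hd hμ1 hinv hne k) hd0.le
  -- Markov
  set A := {u : EuclideanSpace ℝ (Fin d) | ε ≤ f u} with hAdef
  have hAmeas : MeasurableSet A := measurableSet_le measurable_const hf_cont.measurable
  have hε2k : ε^(2*k) = (120*L/d)^k := by rw [pow_mul, hε2]
  have hmarkov : ε^(2*k) * (μ A).toReal ≤ ∫ u, f u ^(2*k) ∂μ := by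
    have h1 := mul_meas_ge_le_integral_of_nonneg (μ := μ) (f := fun u => f u ^(2*k))
      (Filter.Eventually.of_forall fun u => pow_nonneg (hf_nonneg u) _) (hf_int (2*k)) (ε^(2*k))
    refine le_trans ?_ h1
    apply mul_le_mul_of_nonneg_left _ (pow_nonneg hε0 _)
    apply ENNReal.toReal_mono (measure_ne_top μ _)
    apply measure_mono
    intro u hu
    exact pow_le_pow_left₀ hε0 hu (2*k)
  -- pointwise bound for f^4
  have hpt : ∀ᵐ u ∂μ, f u ^4 ≤ ε^4 + A.indicator (fun _ => (1:ℝ)) u := by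
    filter_upwards [hμ1] with u hu
    rcases le_or_gt ε (f u) with h | h
    · rw [Set.indicator_of_mem (show u ∈ A from h)]
      have h2 : f u ^ 4 ≤ 1 := pow_le_one₀ (hf_nonneg u) (hf_le u hu)
      have h3 : (0:ℝ) ≤ ε^4 := by positivity
      linarith
    · rw [Set.indicator_of_notMem (by simpa [hAdef] using not_le.mpr h)]
      have := pow_le_pow_left₀ (hf_nonneg u) h.le 4
      linarith
  have hint4 : ∫ u, f u ^4 ∂μ ≤ ε^4 + (μ A).toReal := by
    have hii : Integrable (A.indicator (fun _ => (1:ℝ))) μ :=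
      (integrable_const (1:ℝ)).indicator hAmeas
    calc ∫ u, f u ^4 ∂μ
        ≤ ∫ u, (ε^4 + A.indicator (fun _ => (1:ℝ)) u) ∂μ :=
          integral_mono_ae (hf_int 4) ((integrable_const _).add hii) hpt
      _ = ε^4 + (μ A).toReal := by
          rw [integral_add (integrable_const _) hii, integral_const,
            integral_indicator_const _ hAmeas]
          simp [measure_univ, Measure.real]
  -- tail estimate
  have htail : (μ A).toReal ≤ 1/(d:ℝ)^2 := by
    have hpos : (0:ℝ) < (120*L/d)^k := by positivity
    have h2 : (μ A).toReal ≤ (d * (2*(k:ℝ)/d)^k) / (120*L/d)^k := by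
      rw [le_div_iff₀ hpos, mul_comm]
      have h' := hmarkov.trans hmom
      rwa [hε2k] at h'
    refine h2.trans ?_
    have hLne : L ≠ 0 := hL0.ne'
    have hdne : (d:ℝ) ≠ 0 := hd0.ne'
    have hquot : (2*(k:ℝ)/d)^k / (120*L/d)^k = ((2*(k:ℝ))/(120*L))^k := by
      rw [← div_pow]
      congr 1
      field_simp
    have hbase : (2*(k:ℝ))/(120*L) ≤ 1/24 := by
      rw [div_le_div_iff₀ (by positivity) (by norm_num)]
      nlinarith [hkU, hL2, hlog2]
    have hpow : ((2*(k:ℝ))/(120*L))^k ≤ (1/24:ℝ)^k :=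
      pow_le_pow_left₀ (by positivity) hbase k
    have hexp3 : Real.exp 3 ≤ 24 := by
      rw [show (3:ℝ) = 1+1+1 by norm_num, Real.exp_add, Real.exp_add]
      nlinarith [Real.exp_one_lt_d9, Real.exp_pos 1]
    have hlog24 : Real.log (1/24:ℝ) ≤ -3 := by
      rw [one_div, Real.log_inv, neg_le_neg_iff]
      rw [← Real.le_log_iff_exp_le (by norm_num : (0:ℝ) < 24)] at hexp3
      exact hexp3
    have hpow2 : ((1:ℝ)/24)^k ≤ 1/(d:ℝ)^3 := by
      have h24 : ((1:ℝ)/24)^k ≤ (1/24:ℝ)^(L:ℝ) := by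
        rw [← Real.rpow_natCast (1/24:ℝ) k]
        exact Real.rpow_le_rpow_of_exponent_ge (by norm_num) (by norm_num) hkL
      refine h24.trans ?_
      rw [Real.rpow_def_of_pos (by norm_num : (0:ℝ) < 1/24)]
      have hmono : Real.exp (Real.log (1/24) * L) ≤ Real.exp ((-3) * L) :=
        Real.exp_le_exp.mpr (mul_le_mul_of_nonneg_right hlog24 hL0.le)
      refine hmono.trans_eq ?_
      rw [show (-3:ℝ) * L = -(3*L) by ring, Real.exp_neg,
        show (3:ℝ)*L = L+L+L by ring, Real.exp_add, Real.exp_add, Real.exp_log hd0]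
      rw [one_div, pow_succ, pow_succ, pow_one]
    calc (d:ℝ) * (2*(k:ℝ)/d)^k / (120*L/d)^k
        = (d:ℝ) * ((2*(k:ℝ))/(120*L))^k := by rw [mul_div_assoc, hquot]
      _ ≤ (d:ℝ) * (1/(d:ℝ)^3) := mul_le_mul_of_nonneg_left (hpow.trans hpow2) hd0.le
      _ = 1/(d:ℝ)^2 := by field_simp
  -- combine
  have hone_le : 1/(d:ℝ)^2 ≤ 3 * (L/d)^2 := by
    have h48 : (1:ℝ) ≤ 3 * L^2 := by nlinarith [hL2, hlog2]
    calc 1/(d:ℝ)^2 ≤ 3*L^2/(d:ℝ)^2 := by gcongr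
      _ = 3*(L/d)^2 := by rw [div_pow]; ring
  have hε4 : ε^4 = 14400 * (L/d)^2 := by
    rw [show 4 = 2*2 from rfl, pow_mul, hε2]
    field_simp
    ring
  have htotal : ∫ u, f u ^4 ∂μ ≤ 14641 * (L/d)^2 := by
    calc ∫ u, f u ^4 ∂μ ≤ ε^4 + (μ A).toReal := hint4
      _ ≤ 14400 * (L/d)^2 + 3 * (L/d)^2 := by
          rw [hε4]
          exact add_le_add le_rfl (htail.trans hone_le)
      _ ≤ 14641 * (L/d)^2 := by have := sq_nonneg (L/(d:ℝ)); linarith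
  -- conclude with rpow
  have hint_nonneg : (0:ℝ) ≤ ∫ u, f u ^4 ∂μ := by
    apply integral_nonneg
    intro u
    show (0:ℝ) ≤ f u ^4
    positivity
  have hsq : Real.sqrt (L/d)^2 = L/d := Real.sq_sqrt (by positivity)
  have h2eq : (14641:ℝ) * (L/d)^2 = (11 * Real.sqrt (L/d))^4 := by
    rw [mul_pow, show (Real.sqrt (L/d))^4 = ((Real.sqrt (L/d))^2)^2 by ring, hsq]
    norm_num
  have h3 : (∫ u, f u ^4 ∂μ) ^ ((1:ℝ)/4) ≤ ((11 * Real.sqrt (L/d))^4) ^ ((1:ℝ)/4) :=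
    Real.rpow_le_rpow hint_nonneg (htotal.trans_eq h2eq) (by norm_num)
  refine h3.trans_eq ?_
  have hnn : (0:ℝ) ≤ 11 * Real.sqrt (L/d) := by positivity
  rw [← Real.rpow_natCast (11 * Real.sqrt (L/d)) 4, ← Real.rpow_mul hnn]
  norm_num
end

section
/- Let n be a standard Gaussian random vector in R^d with d > 1. Then E[||n||_∞^4] ≤ 4(2 + 2 log(d) + log^2(d)). -/
open MeasureTheory Real ProbabilityTheory Set Filter Topology
open scoped ENNReal NNReal

lemma aux_exp_int {b : ℝ} (a : ℝ) (hb : 0 < b) :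
    (∫ x in Ioi a, exp (-(b*x))) = exp (-(b*a))/b := by
  have h : (∫ x in Ioi a, exp (-(b*x))) = 0 - (-exp (-(b*a))/b) := by
    refine integral_Ioi_of_hasDerivAt_of_tendsto' (f := fun x => -exp (-(b*x))/b) (fun x _ => ?_) ?_ ?_
    · have : HasDerivAt (fun x : ℝ => -(b*x)) (-b) x := by
        simpa using ((hasDerivAt_id x).const_mul b).fun_neg
      simpa [neg_div, mul_comm, mul_div_assoc, mul_div_cancel_left₀, hb.ne'] using
        ((this.exp).div_const b).fun_neg
    · simpa [neg_mul] using exp_neg_integrableOn_Ioi a hb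
    · have : Tendsto (fun x : ℝ => exp (-(b*x))) atTop (𝓝 0) := by
        apply tendsto_exp_neg_atTop_nhds_zero.comp
        exact (tendsto_const_mul_atTop_of_pos hb).mpr tendsto_id
      simpa [neg_div] using (this.div_const b).neg
  rw [h]; ring

lemma aux_cube_int (r : ℝ) :
    (∫ t in Ioi r, t^3 * exp (-t^2/2)) = (r^2+2) * exp (-r^2/2) := by
  have T : Tendsto (fun t : ℝ => t^2/2) atTop atTop :=
    (tendsto_pow_atTop two_ne_zero).atTop_div_const two_pos
  have h : (∫ t in Ioi r, t^3 * exp (-t^2/2)) = 0 - (-(r^2+2) * exp (-r^2/2)) := by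
    refine integral_Ioi_of_hasDerivAt_of_tendsto'
      (f := fun t => -(t^2+2) * exp (-t^2/2)) (fun x _ => ?_) ?_ ?_
    · have h1 : HasDerivAt (fun t : ℝ => -t^2/2) (-x) x := by
        exact (((hasDerivAt_pow 2 x).fun_neg).div_const 2).congr_deriv
          (by rw [show (2:ℕ) - 1 = 1 from rfl]; ring)
      have h2 : HasDerivAt (fun t : ℝ => -(t^2+2)) (-(2*x)) x := by
        simpa using (((hasDerivAt_pow 2 x).add_const 2).fun_neg)
      have := h2.mul h1.exp
      exact this.congr_deriv (by ring)
    · have := (integrable_rpow_mul_exp_neg_mul_sq (by norm_num : (0:ℝ) < 1/2)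
        (by norm_num : (-1:ℝ) < 3)).integrableOn (s := Ioi r)
      refine this.congr_fun (fun x _ => ?_) measurableSet_Ioi
      dsimp only
      rw [show ((3:ℝ)) = ((3:ℕ):ℝ) by norm_num, Real.rpow_natCast]
      ring_nf
    · have h0 : Tendsto (fun x : ℝ => x * exp (-x)) atTop (𝓝 0) := by
        simpa using tendsto_pow_mul_exp_neg_atTop_nhds_zero 1
      have h1 : Tendsto (fun t : ℝ => (t^2/2) * exp (-(t^2/2))) atTop (𝓝 0) := by
        simpa [Function.comp_def] using h0.comp T
      have h2 : Tendsto (fun t : ℝ => exp (-(t^2/2))) atTop (𝓝 0) :=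
        tendsto_exp_neg_atTop_nhds_zero.comp T
      have h3 : Tendsto (fun t : ℝ => -(2*((t^2/2) * exp (-(t^2/2))) + 2 * exp (-(t^2/2))))
          atTop (𝓝 0) := by
        simpa using ((h1.const_mul 2).add (h2.const_mul 2)).neg
      exact h3.congr (fun t => by ring_nf)
  rw [h]; ring

lemma aux_tail {t : ℝ} (ht : 1 ≤ t) :
    gaussianReal 0 1 {y : ℝ | t ≤ |y|} ≤ ENNReal.ofReal (exp (-t^2/2)) := by
  have ht0 : (0:ℝ) < t := lt_of_lt_of_le one_pos ht
  rw [gaussianReal_apply_eq_integral 0 one_ne_zero]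
  refine ENNReal.ofReal_le_ofReal ?_
  have hSet : {y : ℝ | t ≤ |y|} = Iic (-t) ∪ Ici t := by
    ext y; simp [le_abs, le_neg, or_comm]
  have hint : Integrable (gaussianPDFReal 0 1) := integrable_gaussianPDFReal 0 1
  have hdisj : Disjoint (Iic (-t)) (Ici t) := by
    rw [Set.disjoint_left]
    intro y hy hy'
    simp only [mem_Iic, mem_Ici] at hy hy'
    linarith
  rw [hSet, setIntegral_union hdisj measurableSet_Ici hint.integrableOn hint.integrableOn]
  have heven : ∀ x : ℝ, gaussianPDFReal 0 1 (-x) = gaussianPDFReal 0 1 x := by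
    intro x
    simp only [gaussianPDFReal]
    ring_nf
  have hsym : (∫ y in Iic (-t), gaussianPDFReal 0 1 y) = ∫ y in Ioi t, gaussianPDFReal 0 1 y := by
    have h := integral_comp_neg_Iic (c := -t) (f := gaussianPDFReal 0 1)
    rw [neg_neg] at h
    rw [← h]
    exact setIntegral_congr_fun measurableSet_Iic (fun x _ => (heven x).symm)
  have h2pi : (2:ℝ) ≤ √(2*π) := by
    have h4 : (4:ℝ) ≤ 2*π := by nlinarith [pi_gt_three]
    have hs := Real.sqrt_le_sqrt h4
    rwa [show √(4:ℝ) = 2 by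
      rw [show (4:ℝ) = 2^2 by norm_num, Real.sqrt_sq (by norm_num : (0:ℝ) ≤ 2)]] at hs
  have hsqrtpos : (0:ℝ) < √(2*π) := lt_of_lt_of_le two_pos h2pi
  have hbound : (∫ y in Ioi t, gaussianPDFReal 0 1 y)
      ≤ (√(2*π))⁻¹ * (exp (t^2/2) * (exp (-(t*t))/t)) := by
    have hgint : IntegrableOn (fun y : ℝ => (√(2*π))⁻¹ * (exp (t^2/2) * exp (-(t*y)))) (Ioi t) := by
      have h := (exp_neg_integrableOn_Ioi t ht0)
      simpa [neg_mul, mul_assoc, IntegrableOn] using (h.const_mul ((√(2*π))⁻¹ * exp (t^2/2)))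
    have hle : ∀ y ∈ Ioi t, gaussianPDFReal 0 1 y
        ≤ (√(2*π))⁻¹ * (exp (t^2/2) * exp (-(t*y))) := by
      intro y _
      simp only [gaussianPDFReal, sub_zero, NNReal.coe_one, mul_one]
      rw [← Real.exp_add]
      refine mul_le_mul_of_nonneg_left ?_ (inv_nonneg.mpr (Real.sqrt_nonneg _))
      exact Real.exp_le_exp.mpr (by nlinarith [sq_nonneg (y - t)])
    calc (∫ y in Ioi t, gaussianPDFReal 0 1 y)
        ≤ ∫ y in Ioi t, (√(2*π))⁻¹ * (exp (t^2/2) * exp (-(t*y))) :=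
          setIntegral_mono_on hint.integrableOn hgint measurableSet_Ioi hle
      _ = (√(2*π))⁻¹ * (exp (t^2/2) * (exp (-(t*t))/t)) := by
          rw [MeasureTheory.integral_const_mul, MeasureTheory.integral_const_mul,
            aux_exp_int t ht0]
  have key : (√(2*π))⁻¹ * (exp (t^2/2) * (exp (-(t*t))/t)) ≤ exp (-t^2/2) / 2 := by
    have hexp : exp (t^2/2) * exp (-(t*t)) = exp (-t^2/2) := by
      rw [← Real.exp_add]; congr 1; ring
    have hE : (√(2*π))⁻¹ * (exp (t^2/2) * (exp (-(t*t))/t)) = exp (-t^2/2) / (t * √(2*π)) := by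
      rw [← mul_div_assoc, hexp]
      field_simp
    rw [hE]
    refine div_le_div_of_nonneg_left (Real.exp_nonneg _) two_pos (by nlinarith)
  rw [hsym, integral_Ici_eq_integral_Ioi]
  linarith [hbound, key]

lemma aux_union (d : ℕ) {t : ℝ} (ht : 0 < t) :
    (Measure.pi fun _ : Fin d => gaussianReal 0 1) {x : Fin d → ℝ | t ≤ ‖x‖}
      ≤ (d : ℝ≥0∞) * gaussianReal 0 1 {y : ℝ | t ≤ |y|} := by
  set ν := gaussianReal 0 1 with hν
  set μ := Measure.pi fun _ : Fin d => ν with hμ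
  have hsub : {x : Fin d → ℝ | t ≤ ‖x‖}
      ⊆ ⋃ i, Function.eval i ⁻¹' {y : ℝ | t ≤ |y|} := by
    intro x hx
    by_contra h
    simp only [mem_iUnion, mem_preimage, mem_setOf_eq, not_exists, not_le,
      Function.eval] at h
    have hlt : ‖x‖ < t := (pi_norm_lt_iff ht).mpr
      (fun i => by simpa [Real.norm_eq_abs] using h i)
    exact absurd hx (by simp [not_le, hlt])
  have hSm : MeasurableSet {y : ℝ | t ≤ |y|} := by
    have : {y : ℝ | t ≤ |y|} = (fun y : ℝ => |y|) ⁻¹' Ici t := rfl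
    rw [this]
    exact measurable_abs measurableSet_Ici
  have hev : ∀ i : Fin d, μ (Function.eval i ⁻¹' {y : ℝ | t ≤ |y|}) = ν {y : ℝ | t ≤ |y|} := by
    intro i
    rw [Set.eval_preimage, hμ, Measure.pi_pi]
    rw [Fintype.prod_eq_single i (fun j hj => by simp [Function.update_of_ne hj])]
    simp
  calc μ {x : Fin d → ℝ | t ≤ ‖x‖}
      ≤ μ (⋃ i, Function.eval i ⁻¹' {y : ℝ | t ≤ |y|}) := measure_mono hsub
    _ ≤ ∑' i : Fin d, μ (Function.eval i ⁻¹' {y : ℝ | t ≤ |y|}) := measure_iUnion_le _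
    _ = ∑ i : Fin d, ν {y : ℝ | t ≤ |y|} := by rw [tsum_fintype]; exact Finset.sum_congr rfl (fun i _ => hev i)
    _ = (d : ℝ≥0∞) * ν {y : ℝ | t ≤ |y|} := by
        rw [Finset.sum_const, Finset.card_univ, Fintype.card_fin, nsmul_eq_mul]

/-- For a standard Gaussian vector `n` in `ℝ^d`, `d > 1`:
`E[‖n‖_∞⁴] ≤ 4(2 + 2 log d + log² d)`. (Here `‖·‖` on `Fin d → ℝ` is the sup norm.) -/
theorem stmt11 (d : ℕ) (hd : 1 < d) :
    ∫ x, ‖x‖ ^ 4 ∂(Measure.pi fun _ : Fin d => gaussianReal 0 1)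
      ≤ 4 * (2 + 2 * Real.log d + Real.log d ^ 2) := by
  set μ := Measure.pi fun _ : Fin d => gaussianReal 0 1 with hμ
  have hd0 : (0:ℝ) < d := by positivity
  have hd1 : (1:ℝ) < d := by exact_mod_cast hd
  set L : ℝ := Real.log d with hL
  have hL0 : 0 < L := Real.log_pos hd1
  set r : ℝ := Real.sqrt (2 * L) with hr
  have hr2 : r^2 = 2*L := Real.sq_sqrt (by positivity)
  have hr1 : 1 ≤ r := by
    have h2 : Real.log 2 ≤ L := Real.log_le_log two_pos (by exact_mod_cast hd)
    have hlog2 : (0.6931471803 : ℝ) < Real.log 2 := Real.log_two_gt_d9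
    have : (1:ℝ) ≤ 2 * L := by nlinarith
    calc (1:ℝ) = Real.sqrt 1 := (Real.sqrt_one).symm
      _ ≤ r := Real.sqrt_le_sqrt this
  have hr0 : (0:ℝ) < r := lt_of_lt_of_le one_pos hr1
  -- reduce to lintegral
  have hnn : 0 ≤ᵐ[μ] fun x : Fin d → ℝ => ‖x‖^4 := ae_of_all _ fun x => by positivity
  have hmeas : AEStronglyMeasurable (fun x : Fin d → ℝ => ‖x‖^4) μ :=
    ((continuous_norm.pow 4)).aestronglyMeasurable
  rw [MeasureTheory.integral_eq_lintegral_of_nonneg_ae hnn hmeas]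
  apply ENNReal.toReal_le_of_le_ofReal (by positivity)
  -- layer cake
  have lc := lintegral_rpow_eq_lintegral_meas_le_mul μ (f := fun x : Fin d → ℝ => ‖x‖)
    (ae_of_all _ fun x => norm_nonneg x) continuous_norm.measurable.aemeasurable (p := 4) (by norm_num)
  have hpow : ∀ x : Fin d → ℝ, ENNReal.ofReal (‖x‖^(4:ℕ)) = ENNReal.ofReal (‖x‖ ^ (4:ℝ)) := by
    intro x
    rw [← Real.rpow_natCast ‖x‖ 4]
    norm_num
  calc (∫⁻ x, ENNReal.ofReal (‖x‖^4) ∂μ)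
      = ∫⁻ x, ENNReal.ofReal (‖x‖ ^ (4:ℝ)) ∂μ := lintegral_congr hpow
    _ = ENNReal.ofReal 4 * ∫⁻ t in Ioi 0,
          μ {a : Fin d → ℝ | t ≤ ‖a‖} * ENNReal.ofReal (t ^ ((4:ℝ)-1)) := lc
    _ ≤ ENNReal.ofReal 4 * (ENNReal.ofReal (L^2) + ENNReal.ofReal (2*L+2)) := ?_
    _ ≤ ENNReal.ofReal (4 * (2 + 2 * L + L ^ 2)) := by
        rw [← ENNReal.ofReal_add (by positivity) (by positivity),
          ← ENNReal.ofReal_mul (by norm_num)]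
        exact ENNReal.ofReal_le_ofReal (by nlinarith)
  refine mul_le_mul_right ?_ _
  rw [← Ioc_union_Ioi_eq_Ioi hr0.le, lintegral_union measurableSet_Ioi
    (Set.Ioc_disjoint_Ioi le_rfl)]
  have part1 : (∫⁻ t in Ioc 0 r, μ {a : Fin d → ℝ | t ≤ ‖a‖} * ENNReal.ofReal (t ^ ((4:ℝ)-1)))
      ≤ ENNReal.ofReal (L^2) := by
    have step : ∀ t : ℝ, μ {a : Fin d → ℝ | t ≤ ‖a‖} * ENNReal.ofReal (t ^ ((4:ℝ)-1))
        ≤ ENNReal.ofReal (t ^ ((4:ℝ)-1)) := by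
      intro t
      calc μ {a : Fin d → ℝ | t ≤ ‖a‖} * ENNReal.ofReal (t ^ ((4:ℝ)-1))
          ≤ 1 * ENNReal.ofReal (t ^ ((4:ℝ)-1)) := mul_le_mul_left prob_le_one _
        _ = _ := one_mul _
    refine le_trans (lintegral_mono step) ?_
    have hint : IntegrableOn (fun t : ℝ => t ^ ((4:ℝ)-1)) (Ioc 0 r) :=
      (intervalIntegral.intervalIntegrable_rpow' (by norm_num)).1
    rw [← ofReal_integral_eq_lintegral_ofReal hint ?hnn]
    case hnn =>
      filter_upwards [self_mem_ae_restrict (measurableSet_Ioc : MeasurableSet (Ioc (0:ℝ) r))]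
      intro t htm
      exact Real.rpow_nonneg htm.1.le _
    refine ENNReal.ofReal_le_ofReal ?_
    rw [← intervalIntegral.integral_of_le hr0.le,
      integral_rpow (Or.inl (by norm_num : (-1:ℝ) < 4-1))]
    have : r ^ ((4:ℝ)-1+1) = r^(4:ℕ) := by
      rw [show ((4:ℝ)-1+1) = ((4:ℕ):ℝ) by norm_num, Real.rpow_natCast]
    rw [this, Real.zero_rpow (by norm_num)]
    have : r^(4:ℕ) = 4 * L^2 := by
      have : r^(4:ℕ) = (r^2)^2 := by ring
      rw [this, hr2]; ring
    rw [this]; norm_num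
  have part2 : (∫⁻ t in Ioi r, μ {a : Fin d → ℝ | t ≤ ‖a‖} * ENNReal.ofReal (t ^ ((4:ℝ)-1)))
      ≤ ENNReal.ofReal (2*L+2) := by
    have step : ∀ t ∈ Ioi r, μ {a : Fin d → ℝ | t ≤ ‖a‖} * ENNReal.ofReal (t ^ ((4:ℝ)-1))
        ≤ ENNReal.ofReal ((d * exp (-t^2/2)) * t^3) := by
      intro t htm
      have ht1 : 1 ≤ t := le_trans hr1 (le_of_lt htm)
      have ht0 : 0 < t := lt_of_lt_of_le one_pos ht1
      have h1 : μ {a : Fin d → ℝ | t ≤ ‖a‖} ≤ ENNReal.ofReal (d * exp (-t^2/2)) := by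
        refine le_trans (aux_union d ht0) ?_
        rw [ENNReal.ofReal_mul (by positivity), ENNReal.ofReal_natCast]
        exact mul_le_mul_right (aux_tail ht1) _
      have h2 : ENNReal.ofReal (t ^ ((4:ℝ)-1)) = ENNReal.ofReal (t^(3:ℕ)) := by
        rw [show ((4:ℝ)-1) = ((3:ℕ):ℝ) by norm_num, Real.rpow_natCast]
      rw [h2, ENNReal.ofReal_mul (by positivity)]
      exact mul_le_mul_left h1 _
    refine le_trans (setLIntegral_mono' measurableSet_Ioi step) ?_
    have hint : IntegrableOn (fun t : ℝ => (d * exp (-t^2/2)) * t^3) (Ioi r) := by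
      have h := (integrable_rpow_mul_exp_neg_mul_sq (by norm_num : (0:ℝ) < 1/2)
        (by norm_num : (-1:ℝ) < 3)).integrableOn (s := Ioi r)
      have h2 : IntegrableOn (fun x : ℝ => (d:ℝ) * (x ^ (3:ℝ) * exp (-(1/2) * x^2))) (Ioi r) :=
        h.const_mul (d:ℝ)
      refine h2.congr_fun (fun x _ => ?_) measurableSet_Ioi
      dsimp only
      rw [show ((3:ℝ)) = ((3:ℕ):ℝ) by norm_num, Real.rpow_natCast]
      ring_nf
    rw [← ofReal_integral_eq_lintegral_ofReal hint ?hnn2]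
    case hnn2 =>
      filter_upwards [self_mem_ae_restrict (measurableSet_Ioi : MeasurableSet (Ioi r))]
      intro t htm
      have ht0 : (0:ℝ) < t := lt_trans hr0 htm
      positivity
    refine ENNReal.ofReal_le_ofReal ?_
    have : (∫ t in Ioi r, (d * exp (-t^2/2)) * t^3) = d * ((r^2+2) * exp (-r^2/2)) := by
      calc (∫ t in Ioi r, (d * exp (-t^2/2)) * t^3)
          = ∫ t in Ioi r, (d:ℝ) * (t^3 * exp (-t^2/2)) := by
            congr 1; ext t; ring
        _ = (d:ℝ) * ∫ t in Ioi r, t^3 * exp (-t^2/2) := MeasureTheory.integral_const_mul _ _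
        _ = d * ((r^2+2) * exp (-r^2/2)) := by rw [aux_cube_int r]
    rw [this, hr2]
    have hexp : exp (-(2*L)/2) = 1/d := by
      rw [show (-(2*L)/2) = -L by ring, Real.exp_neg, hL, Real.exp_log hd0]
      norm_num
    rw [hexp]
    refine le_of_eq ?_
    field_simp
  calc _ ≤ ENNReal.ofReal (L^2) + ENNReal.ofReal (2*L+2) := add_le_add part1 part2
end

section
/- For any nonnegative random variable Y and any r ≥ 0, if Pr(Y > z^{1/4}) ≤ d exp(-sqrt(z)/2) for all z ≥ r, then E[Y^4] ≤ r + 4d(2 + sqrt(r)) exp(-sqrt(r)/2). -/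
open MeasureTheory Real Set Filter Topology

lemma aux_hasDerivAt (t : ℝ) (ht : 0 < t) :
    HasDerivAt (fun x => -4 * (2 + Real.sqrt x) * Real.exp (-Real.sqrt x / 2))
      (Real.exp (-Real.sqrt t / 2)) t := by
  have hs0 : Real.sqrt t ≠ 0 := (Real.sqrt_pos.mpr ht).ne'
  have hs : HasDerivAt Real.sqrt (1 / (2 * Real.sqrt t)) t :=
    Real.hasDerivAt_sqrt (ne_of_gt ht)
  have h1 : HasDerivAt (fun x => -4 * (2 + Real.sqrt x))
      (-4 * (1 / (2 * Real.sqrt t))) t := by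
    simpa using ((hasDerivAt_const t (2:ℝ)).add hs).const_mul (-4)
  have h2' : HasDerivAt (fun x => -Real.sqrt x / 2) (-(1 / (2 * Real.sqrt t)) / 2) t := by
    simpa using hs.neg.div_const 2
  have h2 : HasDerivAt (fun x => Real.exp (-Real.sqrt x / 2))
      (Real.exp (-Real.sqrt t / 2) * (-(1 / (2 * Real.sqrt t)) / 2)) t := h2'.exp
  have := h1.mul h2
  refine HasDerivAt.congr_deriv this ?_
  linear_combination (Real.exp (-Real.sqrt t / 2)) * mul_inv_cancel₀ hs0

lemma aux_tendsto :
    Tendsto (fun t => -4 * (2 + Real.sqrt t) * Real.exp (-Real.sqrt t / 2)) atTop (𝓝 0) := by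
  have hsqrt : Tendsto Real.sqrt atTop atTop := by
    have h := tendsto_rpow_atTop (by norm_num : (0:ℝ) < 1/2)
    refine h.congr' ?_
    filter_upwards [eventually_ge_atTop (0:ℝ)] with x hx
    exact (Real.sqrt_eq_rpow x).symm
  have hu : Tendsto (fun s : ℝ => s / 2) atTop atTop :=
    tendsto_id.atTop_div_const (by norm_num)
  have e0 : Tendsto (fun s : ℝ => Real.exp (-(s/2))) atTop (𝓝 0) :=
    Real.tendsto_exp_neg_atTop_nhds_zero.comp hu
  have e1 : Tendsto (fun s : ℝ => (s/2) * Real.exp (-(s/2))) atTop (𝓝 0) := by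
    have := (Real.tendsto_pow_mul_exp_neg_atTop_nhds_zero 1).comp hu
    simpa [Function.comp_def] using this
  have hG : Tendsto (fun s : ℝ => -4 * (2 + s) * Real.exp (-s / 2)) atTop (𝓝 0) := by
    have h := (e0.const_mul (-8)).add (e1.const_mul (-8))
    simp only [mul_zero, add_zero] at h
    refine h.congr fun s => ?_
    rw [neg_div]
    ring
  have := hG.comp hsqrt
  exact this

/-- Tail-integration bound: if `Pr(Y > z^{1/4}) ≤ d exp(-√z/2)` for all `z ≥ r`, then
`E[Y⁴] ≤ r + 4d(2 + √r) exp(-√r/2)`. -/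
theorem stmt12 {Ω : Type*} [MeasurableSpace Ω] (μ : Measure Ω) [IsProbabilityMeasure μ]
    (Y : Ω → ℝ) (hY : ∀ ω, 0 ≤ Y ω)
    (hint : Integrable (fun ω => Y ω ^ 4) μ)
    (d r : ℝ) (hd : 0 < d) (hr : 0 ≤ r)
    (htail : ∀ z ≥ r, μ {ω | Y ω > z ^ ((1 : ℝ) / 4)}
      ≤ ENNReal.ofReal (d * Real.exp (-Real.sqrt z / 2))) :
    ∫ ω, Y ω ^ 4 ∂μ
      ≤ r + 4 * d * (2 + Real.sqrt r) * Real.exp (-Real.sqrt r / 2) := by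
  set F : ℝ → ℝ := fun t => -4 * (2 + Real.sqrt t) * Real.exp (-Real.sqrt t / 2) with hFdef
  have hcont : ContinuousWithinAt F (Ici r) r := by
    have : Continuous F := by
      apply Continuous.mul
      · exact continuous_const.mul (continuous_const.add Real.continuous_sqrt)
      · exact (Real.continuous_sqrt.neg.div_const 2).rexp
    exact this.continuousWithinAt
  have hderiv : ∀ t ∈ Ioi r, HasDerivAt F (Real.exp (-Real.sqrt t / 2)) t :=
    fun t ht => aux_hasDerivAt t (lt_of_le_of_lt hr ht)
  have hpos : ∀ t ∈ Ioi r, 0 ≤ Real.exp (-Real.sqrt t / 2) := fun t _ => (Real.exp_pos _).le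
  have hFt : Tendsto F atTop (𝓝 0) := aux_tendsto
  have hFint : IntegrableOn (fun t => Real.exp (-Real.sqrt t / 2)) (Ioi r) :=
    integrableOn_Ioi_deriv_of_nonneg hcont hderiv hpos hFt
  have hval : ∫ t in Ioi r, Real.exp (-Real.sqrt t / 2)
      = 4 * (2 + Real.sqrt r) * Real.exp (-Real.sqrt r / 2) := by
    have := integral_Ioi_of_hasDerivAt_of_nonneg hcont hderiv hpos hFt
    rw [this, hFdef]
    ring
  -- layer cake
  have hnn : 0 ≤ᵐ[μ] fun ω => Y ω ^ 4 :=
    Eventually.of_forall fun ω => pow_nonneg (hY ω) 4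
  have key : ∫⁻ ω, ENNReal.ofReal (Y ω ^ 4) ∂μ = ∫⁻ t in Ioi 0, μ {a | t < Y a ^ 4} :=
    lintegral_eq_lintegral_meas_lt μ hnn hint.aemeasurable
  -- bound on (r, ∞)
  have hbound2 : ∫⁻ t in Ioi r, μ {a | t < Y a ^ 4}
      ≤ ENNReal.ofReal (4 * d * (2 + Real.sqrt r) * Real.exp (-Real.sqrt r / 2)) := by
    have step1 : ∫⁻ t in Ioi r, μ {a | t < Y a ^ 4}
        ≤ ∫⁻ t in Ioi r, ENNReal.ofReal (d * Real.exp (-Real.sqrt t / 2)) := by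
      refine setLIntegral_mono' measurableSet_Ioi fun t ht => ?_
      have ht' : r ≤ t := le_of_lt ht
      have ht0 : 0 ≤ t := le_trans hr ht'
      refine le_trans (measure_mono ?_) (htail t ht')
      intro a ha
      have ha' : t < Y a ^ 4 := ha
      have h1 : t ^ ((1:ℝ)/4) < (Y a ^ 4) ^ ((1:ℝ)/4) :=
        Real.rpow_lt_rpow ht0 ha' (by norm_num)
      have h2 : (Y a ^ 4) ^ ((1:ℝ)/4) = Y a := by
        rw [← Real.rpow_natCast (Y a) 4, ← Real.rpow_mul (hY a)]
        norm_num
      rw [h2] at h1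
      exact h1
    have step2 : ∫⁻ t in Ioi r, ENNReal.ofReal (d * Real.exp (-Real.sqrt t / 2))
        = ENNReal.ofReal (4 * d * (2 + Real.sqrt r) * Real.exp (-Real.sqrt r / 2)) := by
      rw [← ofReal_integral_eq_lintegral_ofReal (hFint.const_mul d)
        (Eventually.of_forall fun t => by positivity)]
      rw [MeasureTheory.integral_const_mul, hval]
      ring_nf
    rw [step2] at step1
    exact step1
  -- bound on (0, r]
  have hbound1 : ∫⁻ t in Ioc 0 r, μ {a | t < Y a ^ 4} ≤ ENNReal.ofReal r := by
    calc ∫⁻ t in Ioc 0 r, μ {a | t < Y a ^ 4} ≤ ∫⁻ _ in Ioc 0 r, 1 :=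
          lintegral_mono fun t => prob_le_one
      _ = ENNReal.ofReal r := by
          rw [setLIntegral_one, Real.volume_Ioc, sub_zero]
  -- combine
  have hsplit : ∫⁻ t in Ioi (0:ℝ), μ {a | t < Y a ^ 4}
      = (∫⁻ t in Ioc 0 r, μ {a | t < Y a ^ 4}) + ∫⁻ t in Ioi r, μ {a | t < Y a ^ 4} := by
    rw [← lintegral_union measurableSet_Ioi (Set.Ioc_disjoint_Ioi le_rfl),
      Set.Ioc_union_Ioi_eq_Ioi hr]
  have htot : ∫⁻ ω, ENNReal.ofReal (Y ω ^ 4) ∂μ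
      ≤ ENNReal.ofReal (r + 4 * d * (2 + Real.sqrt r) * Real.exp (-Real.sqrt r / 2)) := by
    rw [key, hsplit, ENNReal.ofReal_add hr (by positivity)]
    exact add_le_add hbound1 hbound2
  rw [integral_eq_lintegral_of_nonneg_ae hnn hint.aestronglyMeasurable]
  exact ENNReal.toReal_le_of_le_ofReal (by positivity) htot
end
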